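/- For every α ∈ (0,1) and every integer n ≥ 0, one has the bound ∑_{m=0}^{n} c_m^{n+1} m^{α} ≤ (n+1)^{α} − α(1−α). -/
import Mathlib


/-- The coefficients `c_m^{n+1}` of the discretization of the Caputo derivative. -/
noncomputable def caputoCoeff (α : ℝ) (n m : ℕ) : ℝ :=
  if m = 0 then ((n : ℝ) + 1) ^ (1 - α) - (n : ℝ) ^ (1 - α)
  else 2 * ((n : ℝ) + 1 - (m : ℝ)) ^ (1 - α) - ((n : ℝ) + 2 - (m : ℝ)) ^ (1 - α)
    - ((n : ℝ) - (m : ℝ)) ^ (1 - α)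

/-- Bernoulli-type inequality: for `1 ≤ y` and `0 ≤ p ≤ 1`,
`p * y ^ (p-1) ≤ y ^ p - (y-1) ^ p`. -/
lemma bern_aux {y p : ℝ} (hy : 1 ≤ y) (hp0 : 0 ≤ p) (hp1 : p ≤ 1) :
    p * y ^ (p - 1) ≤ y ^ p - (y - 1) ^ p := by
  have hy0 : (0 : ℝ) < y := lt_of_lt_of_le one_pos hy
  have hs : (-1 : ℝ) ≤ -(1 / y) := by
    have : 1 / y ≤ 1 := by
      rw [div_le_one hy0]; exact hy
    linarith
  have key : (1 + -(1 / y)) ^ p ≤ 1 + p * -(1 / y) :=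
    rpow_one_add_le_one_add_mul_self hs hp0 hp1
  have hfact : y - 1 = y * (1 + -(1 / y)) := by
    field_simp
    ring
  have h1y : (0 : ℝ) ≤ 1 + -(1 / y) := by linarith
  have hsplit : (y - 1) ^ p = y ^ p * (1 + -(1 / y)) ^ p := by
    rw [hfact, Real.mul_rpow hy0.le h1y]
  have hyp : (0 : ℝ) ≤ y ^ p := Real.rpow_nonneg hy0.le p
  have h2 : (y - 1) ^ p ≤ y ^ p * (1 + p * -(1 / y)) := by
    rw [hsplit]
    exact mul_le_mul_of_nonneg_left key hyp
  have h3 : y ^ p * (1 + p * -(1 / y)) = y ^ p - p * y ^ (p - 1) := by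
    rw [Real.rpow_sub_one hy0.ne' p]
    field_simp
    ring
  rw [h3] at h2
  linarith

/-- Abel summation identity. -/
lemma abel_aux (h g : ℕ → ℝ) (n : ℕ) :
    ∑ m ∈ Finset.range n, (h (m + 1) - h m) * g (m + 1)
      = h n * g n - h 0 * g 0 - ∑ m ∈ Finset.range n, h m * (g (m + 1) - g m) := by
  induction n with
  | zero => simp
  | succ n ih =>
    rw [Finset.sum_range_succ, Finset.sum_range_succ, ih]
    ring

/-- `∑_{m=0}^{n} c_m^{n+1} m^α ≤ (n+1)^α − α(1−α)`. -/
theorem coeff_weighted_sum_bound (α : ℝ) (hα : α ∈ Set.Ioo (0 : ℝ) 1) (n : ℕ) :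
    ∑ m ∈ Finset.range (n + 1), caputoCoeff α n m * (m : ℝ) ^ α
      ≤ ((n : ℝ) + 1) ^ α - α * (1 - α) := by
  obtain ⟨hα0, hα1⟩ := hα
  set β : ℝ := 1 - α with hβ
  have hβ0 : 0 < β := by rw [hβ]; linarith
  have hβ1 : β ≤ 1 := by rw [hβ]; linarith
  set h : ℕ → ℝ := fun m => ((n : ℝ) - m + 1) ^ β - ((n : ℝ) - m) ^ β with hh
  set g : ℕ → ℝ := fun m => (m : ℝ) ^ α with hg
  have hg0 : g 0 = 0 := by simp [hg, Real.zero_rpow hα0.ne']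
  -- Step 1: rewrite the sum
  have step1 : ∑ m ∈ Finset.range (n + 1), caputoCoeff α n m * (m : ℝ) ^ α
      = ∑ m ∈ Finset.range n, (h (m + 1) - h m) * g (m + 1) := by
    rw [Finset.sum_range_succ']
    have h0 : caputoCoeff α n 0 * ((0 : ℕ) : ℝ) ^ α = 0 := by
      simp [Real.zero_rpow hα0.ne']
    rw [h0, add_zero]
    apply Finset.sum_congr rfl
    intro m hm
    congr 1
    show caputoCoeff α n (m + 1) = h (m + 1) - h m
    rw [caputoCoeff, if_neg (Nat.succ_ne_zero m)]
    simp only [hh]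
    push_cast
    have e1 : (n : ℝ) + 1 - ((m : ℝ) + 1) = (n : ℝ) - ((m : ℝ) + 1) + 1 := by ring
    have e2 : (n : ℝ) + 2 - ((m : ℝ) + 1) = (n : ℝ) - (m : ℝ) + 1 := by ring
    have e3 : (n : ℝ) - ((m : ℝ) + 1) + 1 = (n : ℝ) - (m : ℝ) := by ring
    rw [e1, e2, e3]
    ring
  rw [step1, abel_aux h g n]
  have hn : h n = 1 := by
    simp only [hh]
    have e1 : (n : ℝ) - (n : ℕ) + 1 = 1 := by push_cast; ring
    have e2 : (n : ℝ) - (n : ℕ) = 0 := by push_cast; ring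
    rw [e1, e2, Real.one_rpow, Real.zero_rpow hβ0.ne', sub_zero]
  rw [hn, hg0, mul_zero, sub_zero, one_mul]
  -- Step 3: bound the remaining sum from below
  set N : ℝ := (n : ℝ) + 1 with hN
  have hcn : (0 : ℝ) ≤ (n : ℝ) := Nat.cast_nonneg n
  have hN1 : (1 : ℝ) ≤ N := by rw [hN]; linarith
  have hN0 : (0 : ℝ) < N := lt_of_lt_of_le one_pos hN1
  have key : ∀ m ∈ Finset.range n,
      β * N ^ (β - 1) * (g (m + 1) - g m) ≤ h m * (g (m + 1) - g m) := by
    intro m hm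
    have hmn : m < n := Finset.mem_range.mp hm
    have hmn0 : m + 1 ≤ n := hmn
    have hmn' : ((m + 1 : ℕ) : ℝ) ≤ ((n : ℕ) : ℝ) := Nat.cast_le.mpr hmn0
    push_cast at hmn'
    have hy1 : (1 : ℝ) ≤ (n : ℝ) - m + 1 := by linarith
    have hb := bern_aux hy1 hβ0.le hβ1
    have e : (n : ℝ) - m + 1 - 1 = (n : ℝ) - m := by ring
    rw [e] at hb
    have hble : N ^ (β - 1) ≤ ((n : ℝ) - m + 1) ^ (β - 1) := by
      have hx0 : (0 : ℝ) < (n : ℝ) - m + 1 := by linarith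
      have hxy : (n : ℝ) - m + 1 ≤ N := by rw [hN]; linarith [(Nat.cast_nonneg m : (0:ℝ) ≤ (m:ℝ))]
      have hz : β - 1 ≤ 0 := by linarith
      exact Real.rpow_le_rpow_of_nonpos hx0 hxy hz
    have hgd : 0 ≤ g (m + 1) - g m := by
      simp only [hg]
      have h1 : ((m : ℝ)) ^ α ≤ ((m : ℝ) + 1) ^ α :=
        Real.rpow_le_rpow (Nat.cast_nonneg m) (by linarith) hα0.le
      have e2 : ((m + 1 : ℕ) : ℝ) = (m : ℝ) + 1 := by push_cast; ring
      rw [e2]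
      linarith
    have hhm : β * N ^ (β - 1) ≤ h m := by
      simp only [hh]
      calc β * N ^ (β - 1) ≤ β * ((n : ℝ) - m + 1) ^ (β - 1) :=
            mul_le_mul_of_nonneg_left hble hβ0.le
        _ ≤ _ := hb
    exact mul_le_mul_of_nonneg_right hhm hgd
  have htel : ∑ m ∈ Finset.range n, (g (m + 1) - g m) = (n : ℝ) ^ α := by
    rw [Finset.sum_range_sub g, hg0, sub_zero]
  have hsum : β * N ^ (β - 1) * (n : ℝ) ^ α
      ≤ ∑ m ∈ Finset.range n, h m * (g (m + 1) - g m) := by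
    calc β * N ^ (β - 1) * (n : ℝ) ^ α
        = ∑ m ∈ Finset.range n, β * N ^ (β - 1) * (g (m + 1) - g m) := by
          rw [← Finset.mul_sum, htel]
      _ ≤ _ := Finset.sum_le_sum key
  have hgn : g n = (n : ℝ) ^ α := rfl
  rw [hgn]
  -- Step 5: final algebra
  have ha : α * N ^ (α - 1) ≤ N ^ α - (n : ℝ) ^ α := by
    have h1 := bern_aux hN1 hα0.le hα1.le
    have hNn : N - 1 = (n : ℝ) := by rw [hN]; ring
    rw [hNn] at h1
    exact h1
  have hb : (n : ℝ) / N ≤ (n : ℝ) ^ α * N ^ (β - 1) := by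
    have hβ1' : β - 1 = -α := by rw [hβ]; ring
    rw [hβ1', Real.rpow_neg hN0.le]
    rcases Nat.eq_zero_or_pos n with h0 | hpos
    · subst h0
      simp [Real.zero_rpow hα0.ne']
    · have hn0 : (0 : ℝ) < (n : ℝ) := by exact_mod_cast hpos
      have hx1 : (n : ℝ) / N ≤ 1 := by
        rw [div_le_one hN0, hN]; linarith
      have hx0 : (0 : ℝ) < (n : ℝ) / N := div_pos hn0 hN0
      have h2 := Real.rpow_le_rpow_of_exponent_ge hx0 hx1 hα1.le
      rw [Real.rpow_one, Real.div_rpow hn0.le hN0.le] at h2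
      calc (n : ℝ) / N ≤ ((n : ℝ)) ^ α / N ^ α := h2
        _ = (n : ℝ) ^ α * (N ^ α)⁻¹ := div_eq_mul_inv _ _
  have hc : α / N ≤ α * N ^ (α - 1) := by
    have h1 : (1 : ℝ) ≤ N ^ α := by
      calc (1 : ℝ) = 1 ^ α := (Real.one_rpow α).symm
        _ ≤ N ^ α := Real.rpow_le_rpow zero_le_one hN1 hα0.le
    have h2 : α ≤ α * N ^ α := by nlinarith
    rw [Real.rpow_sub_one hN0.ne' α]
    calc α / N = α * (1 / N) := by ring
      _ ≤ α * N ^ α * (1 / N) := by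
          apply mul_le_mul_of_nonneg_right h2 (by positivity)
      _ = α * (N ^ α / N) := by ring
  have hfin : α * β ≤ α / N + β * ((n : ℝ) / N) := by
    have h1 : α * β * N ≤ α + β * (n : ℝ) := by
      have e1 : α * β ≤ α := by nlinarith
      have e2 : α * β * (n : ℝ) ≤ β * (n : ℝ) := by
        have h3 : α * β ≤ β := by nlinarith
        exact mul_le_mul_of_nonneg_right h3 hcn
      rw [hN]
      linarith
    have h2 : α / N + β * ((n : ℝ) / N) = (α + β * (n : ℝ)) / N := by
      field_simp
    rw [h2, le_div_iff₀ hN0]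
    linarith
  have hb' : β * ((n : ℝ) / N) ≤ β * ((n : ℝ) ^ α * N ^ (β - 1)) :=
    mul_le_mul_of_nonneg_left hb hβ0.le
  clear_value N h g β
  have goal2 : (n : ℝ) ^ α - β * N ^ (β - 1) * (n : ℝ) ^ α ≤ N ^ α - α * β := by
    linarith [ha, hc, hfin, hb']
  linarith [hsum, goal2]
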